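/- The like relation of the graph of any medium is transitive; hence the graph of a medium is mediatic. -/

import Mathlib

variable {S : Type*}

/-- Result of applying message `m` (a list of tokens) to state `P`. -/
def mApply (m : List (S → S)) (P : S) : S := m.foldl (fun s τ => τ s) P

/-- `τ'` is a reverse of `τ`. -/
def IsReverse (τ τ' : S → S) : Prop := ∀ P Q : S, P ≠ Q → (τ P = Q ↔ τ' Q = P)

/-- `(S, T)` is a token system. -/
def IsTokenSystem (T : Set (S → S)) : Prop :=
  Nontrivial S ∧ T.Nonempty ∧ ∀ τ ∈ T, τ ≠ id

/-- `m` is a message of the token system with token set `T`. -/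
def IsMsg (T : Set (S → S)) (m : List (S → S)) : Prop := ∀ τ ∈ m, τ ∈ T

/-- `m` is stepwise effective for `P`. -/
def StepwiseEff : List (S → S) → S → Prop
  | [], _ => True
  | τ :: rest, P => τ P ≠ P ∧ StepwiseEff rest (τ P)

/-- `m` is consistent: it contains no token together with a reverse of it. -/
def Consistent (m : List (S → S)) : Prop :=
  ∀ τ ∈ m, ∀ τ' ∈ m, ¬ IsReverse τ τ'

/-- `m` is concise for `P`. -/
def Concise (T : Set (S → S)) (m : List (S → S)) (P : S) : Prop :=
  IsMsg T m ∧ Consistent m ∧ StepwiseEff m P ∧ m.Nodup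

/-- `m` is a return message for `P`. -/
def IsReturn (m : List (S → S)) (P : S) : Prop :=
  StepwiseEff m P ∧ mApply m P = P

/-- `m` is vacuous: its indices partition into pairs of mutually reverse tokens. -/
def Vacuous (m : List (S → S)) : Prop :=
  ∃ σ : Equiv.Perm (Fin m.length),
    (∀ i, σ i ≠ i) ∧ (∀ i, σ (σ i) = i) ∧
    ∀ i, IsReverse (m.get i) (m.get (σ i))

/-- `(S, T)` is a medium: token system satisfying [Ma] and [Mb]. -/
def IsMedium (T : Set (S → S)) : Prop :=
  IsTokenSystem T ∧
  (∀ P Q : S, P ≠ Q → ∃ m, Concise T m P ∧ mApply m P = Q) ∧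
  (∀ (m : List (S → S)) (P : S), IsMsg T m → IsReturn m P → Vacuous m)

/-- Content of a message: its set of tokens. -/
def msgContent (m : List (S → S)) : Set (S → S) := {τ | τ ∈ m}

/-- Token content of a state `P`. -/
def SContent (T : Set (S → S)) (P : S) : Set (S → S) :=
  {τ | ∃ (V : S) (m : List (S → S)), Concise T m V ∧ mApply m V = P ∧ τ ∈ m}

/-- `mr` is the reverse message `τ̃ₙ…τ̃₁` of `m = τ₁…τₙ`. -/
def IsReverseOfMsg (m mr : List (S → S)) : Prop :=
  List.Forall₂ (fun τ τ' => IsReverse τ τ' ∧ IsReverse τ' τ) m mr.reverse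

/-- The graph of a medium: states are vertices, token-adjacent states are joined. -/
def mediumGraph (T : Set (S → S)) : SimpleGraph S where
  Adj P Q := P ≠ Q ∧ ∃ τ ∈ T, τ P = Q ∨ τ Q = P
  symm := by
    constructor
    rintro P Q ⟨h, τ, hτ, hor⟩
    exact ⟨h.symm, τ, hτ, hor.symm⟩
  loopless := by
    constructor
    rintro P ⟨h, -⟩
    exact h rfl

variable {V : Type*}

/-- The like relation on arcs of a graph:
`ab L cd` iff `d(a,c) + 1 = d(b,d) + 1 = d(a,d) = d(b,c)`. -/
def Like (G : SimpleGraph V) (a b c d : V) : Prop :=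
  G.Adj a b ∧ G.Adj c d ∧
    G.dist a c + 1 = G.dist b d + 1 ∧ G.dist b d + 1 = G.dist a d ∧
    G.dist a d = G.dist b c

/-- A graph is mediatic if it is connected, bipartite, and its like relation is transitive. -/
def IsMediatic (G : SimpleGraph V) : Prop :=
  G.Connected ∧ G.Colorable 2 ∧
    ∀ a b c d e f : V, Like G a b c d → Like G c d e f → Like G a b e f

namespace MediumAux

open Classical

variable {S : Type*}

theorem mApply_nil (P : S) : mApply [] P = P := rfl

theorem mApply_cons (τ : S → S) (m : List (S → S)) (P : S) :
    mApply (τ :: m) P = mApply m (τ P) := rfl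

theorem mApply_append (m n : List (S → S)) (P : S) :
    mApply (m ++ n) P = mApply n (mApply m P) := by
  simp [mApply, List.foldl_append]

theorem stepwise_nil (P : S) : StepwiseEff ([] : List (S → S)) P := trivial

theorem stepwise_cons {τ : S → S} {m : List (S → S)} {P : S} :
    StepwiseEff (τ :: m) P ↔ τ P ≠ P ∧ StepwiseEff m (τ P) := Iff.rfl

theorem stepwise_append {m n : List (S → S)} {P : S} :
    StepwiseEff (m ++ n) P ↔ StepwiseEff m P ∧ StepwiseEff n (mApply m P) := by
  induction m generalizing P with
  | nil => simp [stepwise_nil, mApply_nil]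
  | cons τ t ih =>
      simp only [List.cons_append, stepwise_cons, ih, mApply_cons, and_assoc]

theorem isReverse_symm {τ τ' : S → S} (h : IsReverse τ τ') : IsReverse τ' τ := by
  intro P Q hPQ
  have := h Q P (Ne.symm hPQ)
  tauto

theorem eq_of_movesLike {τ τ' : S → S}
    (h : ∀ e f : S, e ≠ f → (τ e = f ↔ τ' e = f)) : τ = τ' := by
  funext P
  by_cases h1 : τ' P = P
  · by_cases h2 : τ P = P
    · rw [h1, h2]
    · exact ((h P (τ P) (fun hh => h2 hh.symm)).mp rfl).symm
  · exact (h P (τ' P) (fun hh => h1 hh.symm)).mpr rfl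

theorem reverse_unique {τ ρ ρ' : S → S} (h : IsReverse τ ρ) (h' : IsReverse τ ρ') :
    ρ = ρ' := by
  apply eq_of_movesLike
  intro e f hef
  rw [← h f e (Ne.symm hef), h' f e (Ne.symm hef)]

end MediumAux
namespace MediumAux

variable {S : Type*} {T : Set (S → S)}

theorem exists_reverse (hM : IsMedium T) {τ : S → S} (hτ : τ ∈ T) :
    ∃ ρ ∈ T, IsReverse τ ρ := by
  obtain ⟨P, hP⟩ : ∃ P, τ P ≠ P := by
    by_contra h; push_neg at h
    exact hM.1.2.2 τ hτ (funext fun P => (h P))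
  obtain ⟨m, hm, hmap⟩ := hM.2.1 (τ P) P hP
  have hmsg : IsMsg T (τ :: m) := by
    intro x hx; rcases List.mem_cons.mp hx with h | h
    · exact h ▸ hτ
    · exact hm.1 x h
  have hret : IsReturn (τ :: m) P := by
    refine ⟨⟨hP, hm.2.2.1⟩, ?_⟩
    rw [mApply_cons, hmap]
  obtain ⟨σ, hσ1, hσ2, hσ3⟩ := hM.2.2 _ P hmsg hret
  have h0 : (0 : ℕ) < (τ :: m).length := by simp
  set i0 : Fin (τ :: m).length := ⟨0, h0⟩ with hi0
  have hne := hσ1 i0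
  have hval : (σ i0).val ≠ 0 := fun h => hne (Fin.ext h)
  obtain ⟨k, hk⟩ := Nat.exists_eq_succ_of_ne_zero hval
  have hklt : k < m.length := by
    have h6 := (σ i0).isLt
    simp only [List.length_cons] at h6
    omega
  have hget : (τ :: m).get (σ i0) = m.get ⟨k, hklt⟩ := by
    have : σ i0 = ⟨k+1, by simpa using Nat.succ_lt_succ hklt⟩ := Fin.ext hk
    rw [this]; rfl
  refine ⟨m.get ⟨k, hklt⟩, hm.1 _ (List.get_mem m ⟨k, hklt⟩), ?_⟩
  have h3 := hσ3 i0
  rwa [hget] at h3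

open Classical in
noncomputable def rev (T : Set (S → S)) (τ : S → S) : S → S :=
  if h : ∃ ρ ∈ T, IsReverse τ ρ then h.choose else τ

theorem rev_mem (hM : IsMedium T) {τ : S → S} (hτ : τ ∈ T) : rev T τ ∈ T := by
  rw [rev, dif_pos (exists_reverse hM hτ)]
  exact (exists_reverse hM hτ).choose_spec.1

theorem isReverse_rev (hM : IsMedium T) {τ : S → S} (hτ : τ ∈ T) :
    IsReverse τ (rev T τ) := by
  rw [rev, dif_pos (exists_reverse hM hτ)]
  exact (exists_reverse hM hτ).choose_spec.2

theorem eq_rev_of_isReverse (hM : IsMedium T) {τ ρ : S → S} (hτ : τ ∈ T)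
    (h : IsReverse τ ρ) : ρ = rev T τ :=
  reverse_unique h (isReverse_rev hM hτ)

theorem rev_rev (hM : IsMedium T) {τ : S → S} (hτ : τ ∈ T) :
    rev T (rev T τ) = τ :=
  (eq_rev_of_isReverse hM (rev_mem hM hτ) (isReverse_symm (isReverse_rev hM hτ))).symm

theorem rev_eq_iff (hM : IsMedium T) {τ μ : S → S} (hτ : τ ∈ T) (hμ : μ ∈ T) :
    rev T τ = μ ↔ τ = rev T μ := by
  constructor
  · intro h; rw [← h, rev_rev hM hτ]
  · intro h; rw [h, rev_rev hM hμ]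

theorem arc_unique (hM : IsMedium T) {τ τ' : S → S} {c d : S} (hτ : τ ∈ T)
    (hτ' : τ' ∈ T) (hcd : c ≠ d) (h1 : τ c = d) (h2 : τ' c = d) : τ = τ' := by
  set ρ := rev T τ' with hρ
  have hrev : IsReverse τ' ρ := isReverse_rev hM hτ'
  have hρd : ρ d = c := (hrev c d hcd).mp h2
  have hmsg : IsMsg T [τ, ρ] := by
    intro x hx; simp at hx
    rcases hx with h | h
    · exact h ▸ hτ
    · exact h ▸ rev_mem hM hτ'
  have hret : IsReturn [τ, ρ] c := by
    constructor
    · refine ⟨by rw [h1]; exact Ne.symm hcd, ?_, trivial⟩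
      rw [h1, hρd]; exact hcd
    · show ρ (τ c) = c
      rw [h1, hρd]
  obtain ⟨σ, hσ1, hσ2, hσ3⟩ := hM.2.2 _ c hmsg hret
  have h0 : (0:ℕ) < ([τ, ρ] : List (S → S)).length := by simp
  set i0 : Fin ([τ, ρ] : List (S → S)).length := ⟨0, h0⟩ with hi0
  have hσ0 : σ i0 = ⟨1, by simp⟩ := by
    have h4 := hσ1 i0
    have := (σ i0).isLt
    apply Fin.ext
    have hv : (σ i0).val ≠ 0 := fun h => h4 (Fin.ext h)
    simp at this ⊢; omega
  have hIR : IsReverse τ ρ := by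
    have h5 := hσ3 i0
    rwa [hσ0] at h5
  apply eq_of_movesLike
  intro e f hef
  rw [hIR e f hef, ← hrev e f hef]

end MediumAux
namespace MediumAux

variable {S : Type*} {T : Set (S → S)}

theorem adj_of_token (hM : IsMedium T) {τ : S → S} {P : S} (hτ : τ ∈ T)
    (h : τ P ≠ P) : (mediumGraph T).Adj P (τ P) :=
  ⟨Ne.symm h, τ, hτ, Or.inl rfl⟩

theorem token_of_adj (hM : IsMedium T) {P Q : S} (h : (mediumGraph T).Adj P Q) :
    ∃ τ ∈ T, τ P = Q := by
  obtain ⟨hne, τ, hτ, hor⟩ := h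
  rcases hor with h1 | h1
  · exact ⟨τ, hτ, h1⟩
  · refine ⟨rev T τ, rev_mem hM hτ, ?_⟩
    exact (isReverse_rev hM hτ Q P (Ne.symm hne)).mp h1

theorem walk_of_msg (hM : IsMedium T) {m : List (S → S)} {P : S}
    (hmsg : IsMsg T m) (hs : StepwiseEff m P) :
    ∃ w : (mediumGraph T).Walk P (mApply m P), w.length = m.length := by
  induction m generalizing P with
  | nil => exact ⟨SimpleGraph.Walk.nil, rfl⟩
  | cons τ t ih =>
      obtain ⟨h1, h2⟩ := hs
      obtain ⟨w, hw⟩ := ih (fun x hx => hmsg x (List.mem_cons_of_mem _ hx)) h2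
      refine ⟨SimpleGraph.Walk.cons (adj_of_token hM (hmsg τ List.mem_cons_self) h1) w, ?_⟩
      simp [hw, mApply_cons]

theorem msg_of_walk (hM : IsMedium T) {P Q : S} (w : (mediumGraph T).Walk P Q) :
    ∃ m, IsMsg T m ∧ StepwiseEff m P ∧ mApply m P = Q ∧ m.length = w.length := by
  induction w with
  | nil => exact ⟨[], fun x hx => absurd hx List.not_mem_nil, trivial, rfl, rfl⟩
  | @cons a b c hadj p ih =>
      obtain ⟨m, h1, h2, h3, h4⟩ := ih
      obtain ⟨τ, hτ, hab⟩ := token_of_adj hM hadj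
      refine ⟨τ :: m, ?_, ?_, ?_, ?_⟩
      · intro x hx; rcases List.mem_cons.mp hx with h | h
        · exact h ▸ hτ
        · exact h1 x h
      · exact ⟨by rw [hab]; exact Ne.symm hadj.ne, by rwa [hab]⟩
      · rw [mApply_cons, hab, h3]
      · simp [h4]

theorem medium_reachable (hM : IsMedium T) (P Q : S) :
    (mediumGraph T).Reachable P Q := by
  by_cases h : P = Q
  · exact h ▸ SimpleGraph.Reachable.refl P
  · obtain ⟨m, hm, hmap⟩ := hM.2.1 P Q h
    obtain ⟨w, -⟩ := walk_of_msg hM hm.1 hm.2.2.1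
    exact ⟨hmap ▸ w⟩

theorem medium_connected (hM : IsMedium T) : (mediumGraph T).Connected := by
  have : Nontrivial S := hM.1.1
  constructor
  intro P Q
  exact medium_reachable hM P Q

theorem dist_le_msg (hM : IsMedium T) {m : List (S → S)} {P : S}
    (hmsg : IsMsg T m) (hs : StepwiseEff m P) :
    (mediumGraph T).dist P (mApply m P) ≤ m.length := by
  obtain ⟨w, hw⟩ := walk_of_msg hM hmsg hs
  exact hw ▸ SimpleGraph.dist_le w

/-- In a vacuous concatenation where the first part is consistent,
the first part is no longer than the second. -/
theorem vacuous_append_le {m n : List (S → S)} (hv : Vacuous (m ++ n))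
    (hc : Consistent m) : m.length ≤ n.length := by
  obtain ⟨σ, hσ1, hσ2, hσ3⟩ := hv
  have hlen : (m ++ n).length = m.length + n.length := List.length_append
  have key : ∀ i : Fin (m ++ n).length, i.val < m.length → m.length ≤ (σ i).val := by
    intro i hi
    by_contra hlt
    push_neg at hlt
    have hgi : (m ++ n).get i = m.get ⟨i.val, hi⟩ := by
      simp only [List.get_eq_getElem]; exact List.getElem_append_left hi
    have hgσ : (m ++ n).get (σ i) = m.get ⟨(σ i).val, hlt⟩ := by
      simp only [List.get_eq_getElem]; exact List.getElem_append_left hlt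
    have := hσ3 i
    rw [hgi, hgσ] at this
    exact hc _ (List.get_mem _ _) _ (List.get_mem _ _) this
  let f : Fin m.length → Fin n.length := fun j =>
    ⟨(σ ⟨j.val, by omega⟩).val - m.length, by
      have h1 := key ⟨j.val, by omega⟩ j.isLt
      have h2 := (σ ⟨j.val, by omega⟩).isLt
      omega⟩
  have hinj : Function.Injective f := by
    intro j j' hjj
    have h1 := key ⟨j.val, by omega⟩ j.isLt
    have h2 := key ⟨j'.val, by omega⟩ j'.isLt
    have hv : (σ ⟨j.val, by omega⟩).val = (σ ⟨j'.val, by omega⟩).val := by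
      have := congrArg Fin.val hjj
      simp only [f] at this
      omega
    have : (⟨j.val, by omega⟩ : Fin (m ++ n).length) = ⟨j'.val, by omega⟩ :=
      σ.injective (Fin.ext hv)
    exact Fin.ext (Fin.mk.inj this)
  simpa using Fintype.card_le_of_injective f hinj

theorem concise_length_eq_dist (hM : IsMedium T) {m : List (S → S)} {P Q : S}
    (hc : Concise T m P) (hQ : mApply m P = Q) :
    m.length = (mediumGraph T).dist P Q := by
  have hle : (mediumGraph T).dist P Q ≤ m.length := hQ ▸ dist_le_msg hM hc.1 hc.2.2.1
  obtain ⟨w, hw⟩ := (medium_reachable hM Q P).exists_walk_length_eq_dist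
  obtain ⟨n, hn1, hn2, hn3, hn4⟩ := msg_of_walk hM w
  have hmsg : IsMsg T (m ++ n) := by
    intro x hx; rcases List.mem_append.mp hx with h | h
    · exact hc.1 x h
    · exact hn1 x h
  have hret : IsReturn (m ++ n) P := by
    constructor
    · rw [stepwise_append]; exact ⟨hc.2.2.1, hQ ▸ hn2⟩
    · rw [mApply_append, hQ, hn3]
  have hv := hM.2.2 _ P hmsg hret
  have := vacuous_append_le hv hc.2.1
  rw [hn4, hw, SimpleGraph.dist_comm] at this
  omega

end MediumAux
namespace MediumAux

variable {S : Type*} {T : Set (S → S)}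

noncomputable local instance : DecidableEq (S → S) := Classical.decEq _

theorem exists_effective (hM : IsMedium T) {τ : S → S} (hτ : τ ∈ T) :
    ∃ x, τ x ≠ x := by
  by_contra h; push_neg at h
  exact hM.1.2.2 τ hτ (funext fun P => (h P))

theorem rev_ne (hM : IsMedium T) {τ : S → S} (hτ : τ ∈ T) : rev T τ ≠ τ := by
  obtain ⟨x, hx⟩ := exists_effective hM hτ
  intro heq
  have hIR : IsReverse τ τ := by
    have := isReverse_rev hM hτ; rwa [heq] at this
  have hadj := adj_of_token hM hτ hx
  have hdist : (mediumGraph T).dist x (τ x) = 1 :=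
    SimpleGraph.dist_eq_one_iff_adj.mpr hadj
  obtain ⟨m, hm, hmap⟩ := hM.2.1 x (τ x) (Ne.symm hx)
  have hlen : m.length = 1 := by
    rw [concise_length_eq_dist hM hm hmap, hdist]
  obtain ⟨μ, hμ⟩ := List.length_eq_one_iff.mp hlen
  subst hμ
  have hμx : μ x = τ x := hmap
  have hμτ : μ = τ :=
    arc_unique hM (hm.1 μ (List.mem_singleton_self μ)) hτ (Ne.symm hx) hμx rfl
  exact hm.2.1 μ (List.mem_singleton_self μ) μ (List.mem_singleton_self μ) (hμτ ▸ hIR)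

theorem count_eq_sum {β : Type*} [DecidableEq β] (l : List β) (a : β) :
    l.count a = ∑ i : Fin l.length, if l.get i = a then 1 else 0 := by
  induction l with
  | nil => simp
  | cons b t ih =>
      rw [List.count_cons, ih]
      have hg : ∀ i : Fin t.length, (b :: t).get i.succ = t.get i := fun i => rfl
      simp only [List.length_cons, Fin.sum_univ_succ, List.get_cons_zero, hg, beq_iff_eq]
      by_cases hba : b = a <;> simp [hba] <;> omega

theorem count_eq_card {β : Type*} [DecidableEq β] (l : List β) (a : β) :
    l.count a = (Finset.univ.filter (fun i : Fin l.length => l.get i = a)).card := by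
  rw [Finset.card_filter, count_eq_sum]

theorem count_eq_of_vacuous (hM : IsMedium T) {W : List (S → S)} (hW : Vacuous W)
    {α : S → S} (hα : α ∈ T) : W.count α = W.count (rev T α) := by
  obtain ⟨σ, h1, h2, h3⟩ := hW
  rw [count_eq_card, count_eq_card]
  refine Finset.card_bij' (fun i _ => σ i) (fun j _ => σ j) ?_ ?_ ?_ ?_
  · intro i hi
    simp only [Finset.mem_filter, Finset.mem_univ, true_and] at hi ⊢
    have := h3 i
    rw [hi] at this
    exact eq_rev_of_isReverse hM hα this
  · intro j hj
    simp only [Finset.mem_filter, Finset.mem_univ, true_and] at hj ⊢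
    have := h3 j
    rw [hj] at this
    have h5 := eq_rev_of_isReverse hM (rev_mem hM hα) this
    rw [h5, rev_rev hM hα]
  · intro i _; exact h2 i
  · intro j _; exact h2 j

noncomputable def revMsg (T : Set (S → S)) (m : List (S → S)) : List (S → S) :=
  (m.map (rev T)).reverse

theorem revMsg_spec (hM : IsMedium T) {m : List (S → S)} {P : S}
    (hmsg : IsMsg T m) (hs : StepwiseEff m P) :
    IsMsg T (revMsg T m) ∧ StepwiseEff (revMsg T m) (mApply m P) ∧
      mApply (revMsg T m) (mApply m P) = P := by
  induction m generalizing P with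
  | nil =>
      exact ⟨fun x hx => absurd hx List.not_mem_nil, trivial, rfl⟩
  | cons μ t ih =>
      have hμ : μ ∈ T := hmsg μ List.mem_cons_self
      obtain ⟨h1, h2⟩ := hs
      obtain ⟨ih1, ih2, ih3⟩ := ih (fun x hx => hmsg x (List.mem_cons_of_mem _ hx)) h2
      have hrw : revMsg T (μ :: t) = revMsg T t ++ [rev T μ] := by
        simp [revMsg]
      have happ : mApply (μ :: t) P = mApply t (μ P) := rfl
      have hrμ : rev T μ (μ P) = P := by
        have := (isReverse_rev hM hμ) P (μ P) (Ne.symm h1)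
        exact this.mp rfl
      refine ⟨?_, ?_, ?_⟩
      · rw [hrw]; intro x hx
        rcases List.mem_append.mp hx with h | h
        · exact ih1 x h
        · rw [List.mem_singleton.mp h]; exact rev_mem hM hμ
      · rw [hrw, happ, stepwise_append]
        refine ⟨ih2, ?_⟩
        rw [ih3]
        refine ⟨?_, trivial⟩
        rw [hrμ]; exact Ne.symm h1
      · rw [hrw, happ, mApply_append, ih3]
        show rev T μ (μ P) = P
        exact hrμ

theorem count_revMsg (hM : IsMedium T) {m : List (S → S)} (hmsg : IsMsg T m)
    {α : S → S} (hα : α ∈ T) : (revMsg T m).count α = m.count (rev T α) := by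
  rw [revMsg, List.count_reverse]
  induction m with
  | nil => simp
  | cons μ t ih =>
      have hμ : μ ∈ T := hmsg μ List.mem_cons_self
      have iht := ih (fun x hx => hmsg x (List.mem_cons_of_mem _ hx))
      simp only [List.map_cons, List.count_cons, beq_iff_eq, iht]
      congr 1
      by_cases h : μ = rev T α
      · rw [if_pos h, if_pos (by rw [h, rev_rev hM hα])]
      · rw [if_neg h, if_neg ?_]
        intro hc
        exact h (by rw [← hc, rev_rev hM hμ])

theorem cross_invariant (hM : IsMedium T) {P Q : S} {m m' : List (S → S)}
    (hm1 : IsMsg T m) (hm2 : StepwiseEff m P) (hm3 : mApply m P = Q)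
    (hm'1 : IsMsg T m') (hm'2 : StepwiseEff m' P) (hm'3 : mApply m' P = Q)
    {α : S → S} (hα : α ∈ T) :
    (m.count α : ℤ) - m.count (rev T α) = (m'.count α : ℤ) - m'.count (rev T α) := by
  obtain ⟨hn1, hn2, hn3⟩ := revMsg_spec hM hm'1 hm'2
  rw [hm'3] at hn2 hn3
  have hmsg : IsMsg T (m ++ revMsg T m') := by
    intro x hx
    rcases List.mem_append.mp hx with h | h
    · exact hm1 x h
    · exact hn1 x h
  have hret : IsReturn (m ++ revMsg T m') P := by
    constructor
    · rw [stepwise_append]; exact ⟨hm2, hm3 ▸ hn2⟩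
    · rw [mApply_append, hm3, hn3]
  have hv := hM.2.2 _ P hmsg hret
  have hc := count_eq_of_vacuous hM hv hα
  rw [List.count_append, List.count_append, count_revMsg hM hm'1 hα,
    count_revMsg hM hm'1 (rev_mem hM hα), rev_rev hM hα] at hc
  omega

open Classical in
noncomputable def theMsg (hM : IsMedium T) (P Q : S) : List (S → S) :=
  if h : P = Q then [] else (hM.2.1 P Q h).choose

theorem theMsg_concise (hM : IsMedium T) {P Q : S} (h : P ≠ Q) :
    Concise T (theMsg hM P Q) P ∧ mApply (theMsg hM P Q) P = Q := by
  rw [theMsg, dif_neg h]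
  exact (hM.2.1 P Q h).choose_spec

theorem theMsg_spec (hM : IsMedium T) (P Q : S) :
    IsMsg T (theMsg hM P Q) ∧ StepwiseEff (theMsg hM P Q) P ∧
      mApply (theMsg hM P Q) P = Q := by
  by_cases h : P = Q
  · subst h
    rw [theMsg, dif_pos rfl]
    exact ⟨fun x hx => absurd hx List.not_mem_nil, trivial, rfl⟩
  · obtain ⟨hc, hmap⟩ := theMsg_concise hM h
    exact ⟨hc.1, hc.2.2.1, hmap⟩

noncomputable def cross (hM : IsMedium T) (α : S → S) (P Q : S) : ℤ :=
  ((theMsg hM P Q).count α : ℤ) - (theMsg hM P Q).count (rev T α)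

theorem cross_spec (hM : IsMedium T) {α : S → S} (hα : α ∈ T) {m : List (S → S)}
    {P Q : S} (h1 : IsMsg T m) (h2 : StepwiseEff m P) (h3 : mApply m P = Q) :
    cross hM α P Q = (m.count α : ℤ) - m.count (rev T α) := by
  obtain ⟨g1, g2, g3⟩ := theMsg_spec hM P Q
  exact cross_invariant hM g1 g2 g3 h1 h2 h3 hα

theorem cross_self (hM : IsMedium T) (α : S → S) (P : S) : cross hM α P P = 0 := by
  rw [cross, theMsg, dif_pos rfl]
  simp

theorem cross_add (hM : IsMedium T) {α : S → S} (hα : α ∈ T) (P Q R : S) :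
    cross hM α P R = cross hM α P Q + cross hM α Q R := by
  obtain ⟨g1, g2, g3⟩ := theMsg_spec hM P Q
  obtain ⟨f1, f2, f3⟩ := theMsg_spec hM Q R
  have hmsg : IsMsg T (theMsg hM P Q ++ theMsg hM Q R) := by
    intro x hx
    rcases List.mem_append.mp hx with h | h
    · exact g1 x h
    · exact f1 x h
  have hstep : StepwiseEff (theMsg hM P Q ++ theMsg hM Q R) P := by
    rw [stepwise_append]
    refine ⟨g2, ?_⟩
    rw [g3]; exact f2
  have hmap : mApply (theMsg hM P Q ++ theMsg hM Q R) P = R := by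
    rw [mApply_append, g3]; exact f3
  rw [cross_spec hM hα hmsg hstep hmap, List.count_append, List.count_append]
  rw [cross, cross]
  push_cast
  ring

theorem cross_symm (hM : IsMedium T) {α : S → S} (hα : α ∈ T) (P Q : S) :
    cross hM α Q P = - cross hM α P Q := by
  have := cross_add hM hα P Q P
  rw [cross_self] at this
  omega

theorem cross_rev (hM : IsMedium T) {α : S → S} (hα : α ∈ T) (P Q : S) :
    cross hM (rev T α) P Q = - cross hM α P Q := by
  rw [cross, cross, rev_rev hM hα]
  ring

theorem cross_arc (hM : IsMedium T) {α : S → S} (hα : α ∈ T) {P : S}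
    (h : α P ≠ P) {μ : S → S} (hμ : μ ∈ T) :
    cross hM μ P (α P) =
      if μ = α then 1 else if μ = rev T α then -1 else 0 := by
  have hmsg : IsMsg T [α] := by
    intro x hx; rw [List.mem_singleton.mp hx]; exact hα
  have hstep : StepwiseEff [α] P := ⟨h, trivial⟩
  have hmap : mApply [α] P = α P := rfl
  rw [cross_spec hM hμ hmsg hstep hmap]
  by_cases h1 : μ = α
  · subst h1
    rw [if_pos rfl]
    have c1 : ([μ] : List (S → S)).count μ = 1 := by simp
    have c2 : ([μ] : List (S → S)).count (rev T μ) = 0 := by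
      rw [List.count_eq_zero]
      intro hc
      exact rev_ne hM hμ (List.mem_singleton.mp hc)
    rw [c1, c2]; rfl
  · rw [if_neg h1]
    have c1 : ([α] : List (S → S)).count μ = 0 := by
      rw [List.count_eq_zero]
      intro hc
      exact h1 (List.mem_singleton.mp hc)
    by_cases h2 : μ = rev T α
    · rw [if_pos h2]
      have c2 : ([α] : List (S → S)).count (rev T μ) = 1 := by
        rw [h2, rev_rev hM hα]; simp
      rw [c1, c2]; rfl
    · rw [if_neg h2]
      have c2 : ([α] : List (S → S)).count (rev T μ) = 0 := by
        rw [List.count_eq_zero]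
        intro hc
        have h6 : rev T μ = α := List.mem_singleton.mp hc
        exact h2 (by rw [← h6, rev_rev hM hμ])
      rw [c1, c2]; rfl

end MediumAux
namespace MediumAux

variable {S : Type*} {T : Set (S → S)}

noncomputable local instance : DecidableEq (S → S) := Classical.decEq _

theorem cross_bound (hM : IsMedium T) {α : S → S} (hα : α ∈ T) (P Q : S) :
    -1 ≤ cross hM α P Q ∧ cross hM α P Q ≤ 1 := by
  by_cases h : P = Q
  · subst h; rw [cross_self]; constructor <;> norm_num
  · obtain ⟨hc, hmap⟩ := theMsg_concise hM h
    have h1 : (theMsg hM P Q).count α ≤ 1 :=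
      List.nodup_iff_count_le_one.mp hc.2.2.2 α
    have h2 : (theMsg hM P Q).count (rev T α) ≤ 1 :=
      List.nodup_iff_count_le_one.mp hc.2.2.2 (rev T α)
    have hcr : cross hM α P Q =
        ((theMsg hM P Q).count α : ℤ) - (theMsg hM P Q).count (rev T α) := rfl
    by_cases hma : α ∈ theMsg hM P Q
    · have hnb : rev T α ∉ theMsg hM P Q := fun hb =>
        hc.2.1 α hma (rev T α) hb (isReverse_rev hM hα)
      have h3 : (theMsg hM P Q).count (rev T α) = 0 := List.count_eq_zero.mpr hnb
      omega
    · have h3 : (theMsg hM P Q).count α = 0 := List.count_eq_zero.mpr hma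
      omega

theorem mem_concise_iff_cross (hM : IsMedium T) {m : List (S → S)} {P Q : S}
    (hc : Concise T m P) (hQ : mApply m P = Q) {μ : S → S} (hμ : μ ∈ T) :
    μ ∈ m ↔ cross hM μ P Q = 1 := by
  rw [cross_spec hM hμ hc.1 hc.2.2.1 hQ]
  constructor
  · intro hm
    have h1 : m.count μ = 1 :=
      le_antisymm (List.nodup_iff_count_le_one.mp hc.2.2.2 μ)
        (List.count_pos_iff.mpr hm)
    have h2 : m.count (rev T μ) = 0 := List.count_eq_zero.mpr
      (fun hb => hc.2.1 μ hm (rev T μ) hb (isReverse_rev hM hμ))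
    rw [h1, h2]; rfl
  · intro he
    by_contra hm
    have h1 : m.count μ = 0 := List.count_eq_zero.mpr hm
    omega

theorem dist_insert (hM : IsMedium T) {α : S → S} (hα : α ∈ T) {u : S}
    (hu : α u ≠ u) {x : S} (hx : cross hM α x u = 0) :
    (mediumGraph T).dist x (α u) = (mediumGraph T).dist x u + 1 := by
  have harc : cross hM α u (α u) = 1 := by
    rw [cross_arc hM hα hu hα, if_pos rfl]
  by_cases hxu : x = u
  · subst hxu
    rw [SimpleGraph.dist_self, SimpleGraph.dist_eq_one_iff_adj.mpr (adj_of_token hM hα hu)]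
  · have hxv : x ≠ α u := by
      intro he
      have h2 : cross hM α x u = -1 := by
        rw [he, cross_symm hM hα u (α u), harc]
      omega
    obtain ⟨hcm, hm⟩ := theMsg_concise hM hxu
    obtain ⟨hcm', hm'⟩ := theMsg_concise hM hxv
    have hadd : ∀ μ, μ ∈ T →
        cross hM μ x (α u) = cross hM μ x u + cross hM μ u (α u) := fun μ hμ =>
      cross_add hM hμ x u (α u)
    have hcrv : cross hM α x (α u) = 1 := by rw [hadd α hα, hx, harc]; ring
    have hαm : α ∉ theMsg hM x u := by
      intro h
      have := (mem_concise_iff_cross hM hcm hm hα).mp h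
      omega
    have hsub1 : ∀ μ ∈ theMsg hM x (α u), μ ∈ theMsg hM x u ∨ μ = α := by
      intro μ hmem
      have hμT : μ ∈ T := hcm'.1 μ hmem
      have h1 : cross hM μ x (α u) = 1 :=
        (mem_concise_iff_cross hM hcm' hm' hμT).mp hmem
      by_cases h2 : μ = α
      · exact Or.inr h2
      · by_cases h3 : μ = rev T α
        · exfalso
          rw [h3, cross_rev hM hα, hcrv] at h1
          omega
        · rw [hadd μ hμT, cross_arc hM hα hu hμT, if_neg h2, if_neg h3] at h1
          refine Or.inl ((mem_concise_iff_cross hM hcm hm hμT).mpr ?_)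
          omega
    have hsub2 : ∀ μ ∈ theMsg hM x u, μ ∈ theMsg hM x (α u) := by
      intro μ hmem
      have hμT : μ ∈ T := hcm.1 μ hmem
      have h1 : cross hM μ x u = 1 :=
        (mem_concise_iff_cross hM hcm hm hμT).mp hmem
      have h2 : μ ≠ α := fun he => by rw [he, hx] at h1; omega
      have h3 : μ ≠ rev T α := fun he => by
        rw [he, cross_rev hM hα, hx] at h1; omega
      refine (mem_concise_iff_cross hM hcm' hm' hμT).mpr ?_
      rw [hadd μ hμT, cross_arc hM hα hu hμT, if_neg h2, if_neg h3, h1]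
      ring
    have hαm' : α ∈ theMsg hM x (α u) :=
      (mem_concise_iff_cross hM hcm' hm' hα).mpr hcrv
    have hset : (theMsg hM x (α u)).toFinset = insert α (theMsg hM x u).toFinset := by
      ext μ
      simp only [List.mem_toFinset, Finset.mem_insert]
      constructor
      · intro h; rcases hsub1 μ h with h | h
        · exact Or.inr h
        · exact Or.inl h
      · intro h; rcases h with h | h
        · exact h ▸ hαm'
        · exact hsub2 μ h
    have hlen : (theMsg hM x (α u)).length = (theMsg hM x u).length + 1 := by
      rw [← List.toFinset_card_of_nodup hcm'.2.2.2, ← List.toFinset_card_of_nodup hcm.2.2.2,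
        hset, Finset.card_insert_of_notMem (by simpa using hαm)]
    rw [← concise_length_eq_dist hM hcm hm, ← concise_length_eq_dist hM hcm' hm', hlen]

theorem dist_erase (hM : IsMedium T) {α : S → S} (hα : α ∈ T) {u : S}
    (hu : α u ≠ u) {x : S} (hx : cross hM α x u = -1) :
    (mediumGraph T).dist x u = (mediumGraph T).dist x (α u) + 1 := by
  have hrv : rev T α (α u) = u := (isReverse_rev hM hα u (α u) (Ne.symm hu)).mp rfl
  have hne : rev T α (α u) ≠ α u := by rw [hrv]; exact fun h => hu h.symm
  have harc : cross hM α u (α u) = 1 := by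
    rw [cross_arc hM hα hu hα, if_pos rfl]
  have hcr : cross hM (rev T α) x (α u) = 0 := by
    rw [cross_rev hM hα, cross_add hM hα x u (α u), hx, harc]
    ring
  have := dist_insert hM (rev_mem hM hα) hne hcr
  rwa [hrv] at this

theorem dist_adj_cases (hM : IsMedium T) {u v : S} (h : (mediumGraph T).Adj u v)
    (x : S) :
    (mediumGraph T).dist x v = (mediumGraph T).dist x u + 1 ∨
      (mediumGraph T).dist x u = (mediumGraph T).dist x v + 1 := by
  obtain ⟨α, hα, huv⟩ := token_of_adj hM h
  have hu : α u ≠ u := by rw [huv]; exact h.ne'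
  have hb1 := cross_bound hM hα x u
  have hb2 := cross_bound hM hα x v
  have harc : cross hM α u v = 1 := by
    have := cross_arc hM hα hu hα
    rw [huv] at this
    rw [this, if_pos rfl]
  have hadd : cross hM α x v = cross hM α x u + 1 := by
    rw [cross_add hM hα x u v, harc]
  have : cross hM α x u = 0 ∨ cross hM α x u = -1 := by omega
  rcases this with h0 | h1
  · left
    have := dist_insert hM hα hu h0
    rwa [huv] at this
  · right
    have := dist_erase hM hα hu h1
    rwa [huv] at this

theorem token_dist (hM : IsMedium T) {τ : S → S} (hτ : τ ∈ T) {a e : S}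
    (ha : τ a ≠ a) (he : τ e ≠ e) :
    (mediumGraph T).dist (τ a) (τ e) = (mediumGraph T).dist a e ∧
      (mediumGraph T).dist a (τ e) = (mediumGraph T).dist a e + 1 ∧
      (mediumGraph T).dist (τ a) e = (mediumGraph T).dist a e + 1 := by
  have harca : cross hM τ a (τ a) = 1 := by
    rw [cross_arc hM hτ ha hτ, if_pos rfl]
  have harce : cross hM τ e (τ e) = 1 := by
    rw [cross_arc hM hτ he hτ, if_pos rfl]
  have c0 : cross hM τ a e = 0 := by
    have h1 : cross hM τ a (τ e) = cross hM τ a e + 1 := by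
      rw [cross_add hM hτ a e (τ e), harce]
    have h2 : cross hM τ (τ a) e = -1 + cross hM τ a e := by
      rw [cross_add hM hτ (τ a) a e, cross_symm hM hτ a (τ a), harca]
    have hb1 := cross_bound hM hτ a (τ e)
    have hb2 := cross_bound hM hτ (τ a) e
    omega
  have hb : (mediumGraph T).dist a (τ e) = (mediumGraph T).dist a e + 1 :=
    dist_insert hM hτ he c0
  have hce : cross hM τ e a = 0 := by
    rw [cross_symm hM hτ a e, c0]; ring
  have hc' : (mediumGraph T).dist e (τ a) = (mediumGraph T).dist e a + 1 :=
    dist_insert hM hτ ha hce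
  have hc : (mediumGraph T).dist (τ a) e = (mediumGraph T).dist a e + 1 := by
    rw [SimpleGraph.dist_comm, hc', SimpleGraph.dist_comm]
  have hcta : cross hM τ (τ a) e = -1 := by
    rw [cross_add hM hτ (τ a) a e, cross_symm hM hτ a (τ a), harca, c0]
    ring
  have ha' : (mediumGraph T).dist (τ a) e = (mediumGraph T).dist (τ a) (τ e) + 1 :=
    dist_erase hM hτ he hcta
  refine ⟨by omega, hb, hc⟩

theorem like_of_token (hM : IsMedium T) {τ : S → S} (hτ : τ ∈ T) {a e : S}
    (ha : τ a ≠ a) (he : τ e ≠ e) :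
    Like (mediumGraph T) a (τ a) e (τ e) := by
  obtain ⟨h1, h2, h3⟩ := token_dist hM hτ ha he
  exact ⟨adj_of_token hM hτ ha, adj_of_token hM hτ he, by omega, by omega, by omega⟩

theorem token_of_like (hM : IsMedium T) {a b c d : S}
    (hL : Like (mediumGraph T) a b c d) :
    ∃ τ ∈ T, τ a = b ∧ τ c = d := by
  obtain ⟨hab, hcd, e1, e2, e3⟩ := hL
  obtain ⟨τ, hτ, hτab⟩ := token_of_adj hM hab
  obtain ⟨μ, hμ, hμcd⟩ := token_of_adj hM hcd
  have hba : τ a ≠ a := by rw [hτab]; exact hab.ne'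
  have hdc : μ c ≠ c := by rw [hμcd]; exact hcd.ne'
  have harcμ : cross hM μ c d = 1 := by
    have := cross_arc hM hμ hdc hμ
    rw [hμcd] at this
    rw [this, if_pos rfl]
  have harcτ : cross hM τ a b = 1 := by
    have := cross_arc hM hτ hba hτ
    rw [hτab] at this
    rw [this, if_pos rfl]
  -- cross μ a c = 0
  have cμ0 : cross hM μ a c = 0 := by
    have h1 : cross hM μ a d = cross hM μ a c + 1 := by
      rw [cross_add hM hμ a c d, harcμ]
    have hb1 := cross_bound hM hμ a d
    have h2 : cross hM μ a c = 0 ∨ cross hM μ a c = -1 := by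
      have hb2 := cross_bound hM hμ a c
      omega
    rcases h2 with h2 | h2
    · exact h2
    · exfalso
      have := dist_erase hM hμ hdc h2
      rw [hμcd] at this
      omega
  -- cross τ a c = 0
  have cτ0 : cross hM τ a c = 0 := by
    have h1 : cross hM τ b c = -1 + cross hM τ a c := by
      rw [cross_add hM hτ b a c, cross_symm hM hτ a b, harcτ]
    have hb1 := cross_bound hM hτ b c
    have h2 : cross hM τ a c = 0 ∨ cross hM τ a c = 1 := by
      have hb2 := cross_bound hM hτ a c
      omega
    rcases h2 with h2 | h2
    · exact h2
    · exfalso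
      have hrb : rev T τ b ≠ b := by
        have : rev T τ b = a := by
          rw [← hτab]
          exact (isReverse_rev hM hτ a (τ a) (Ne.symm hba)).mp rfl
        rw [this]; exact hab.ne
      have hcr : cross hM (rev T τ) c b = 0 := by
        rw [cross_rev hM hτ, cross_symm hM hτ b c, h1, h2]
        ring
      have := dist_insert hM (rev_mem hM hτ) hrb hcr
      have hrba : rev T τ b = a := by
        rw [← hτab]
        exact (isReverse_rev hM hτ a (τ a) (Ne.symm hba)).mp rfl
      rw [hrba] at this
      rw [SimpleGraph.dist_comm (u := c) (v := a),
        SimpleGraph.dist_comm (u := c) (v := b)] at this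
      omega
  by_cases hτμ : τ = μ
  · exact ⟨τ, hτ, hτab, hτμ ▸ hμcd⟩
  exfalso
  by_cases hrev : μ = rev T τ
  · have h1 : cross hM μ a b = -1 := by
      have := cross_arc hM hτ hba hμ
      rw [hτab] at this
      rw [this, if_neg (fun h => hτμ h.symm), if_pos hrev]
    have h2 : cross hM μ b d = 2 := by
      rw [cross_add hM hμ b a d, cross_add hM hμ a c d, cross_symm hM hμ a b, h1,
        cμ0, harcμ]
      ring
    have hb := cross_bound hM hμ b d
    omega
  · have h1 : cross hM μ a b = 0 := by
      have := cross_arc hM hτ hba hμ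
      rw [hτab] at this
      rw [this, if_neg (fun h => hτμ h.symm), if_neg hrev]
    have h2 : cross hM μ b c = 0 := by
      rw [cross_add hM hμ b a c, cross_symm hM hμ a b, h1, cμ0]
      ring
    have := dist_insert hM hμ hdc h2
    rw [hμcd] at this
    omega

theorem like_trans (hM : IsMedium T) (a b c d e f : S)
    (h1 : Like (mediumGraph T) a b c d) (h2 : Like (mediumGraph T) c d e f) :
    Like (mediumGraph T) a b e f := by
  obtain ⟨τ, hτ, hab, hcd⟩ := token_of_like hM h1
  obtain ⟨μ, hμ, hcd', hef⟩ := token_of_like hM h2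
  have hτμ : τ = μ := arc_unique hM hτ hμ h1.2.1.ne hcd hcd'
  subst hτμ
  have ha : τ a ≠ a := by rw [hab]; exact h1.1.ne'
  have he : τ e ≠ e := by rw [hef]; exact h2.2.1.ne'
  have := like_of_token hM hτ ha he
  rwa [hab, hef] at this

theorem medium_colorable (hM : IsMedium T) : (mediumGraph T).Colorable 2 := by
  have : Nontrivial S := hM.1.1
  set O := Classical.arbitrary S with hO
  refine ⟨SimpleGraph.Coloring.mk
    (fun X => ⟨(mediumGraph T).dist O X % 2, by omega⟩) ?_⟩
  intro X Y hadj hEq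
  have hv : (mediumGraph T).dist O X % 2 = (mediumGraph T).dist O Y % 2 :=
    Fin.mk.inj hEq
  rcases dist_adj_cases hM hadj O with h | h
  · omega
  · omega

end MediumAux
/-- The like relation of the graph of a medium is transitive;
hence the graph of a medium is mediatic. -/
theorem stmt15 {T : Set (S → S)} (hM : IsMedium T) :
    (∀ a b c d e f : S, Like (mediumGraph T) a b c d → Like (mediumGraph T) c d e f →
      Like (mediumGraph T) a b e f) ∧
    IsMediatic (mediumGraph T) := by
  exact ⟨MediumAux.like_trans hM, MediumAux.medium_connected hM,
    MediumAux.medium_colorable hM, MediumAux.like_trans hM⟩
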